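/- Under the No-Boundary overlay construction, for any two vertices s, t in the same partition G_i, the global shortest distance satisfies d_G(s,t) = min( d_{G_i}(s,t), min over pairs b_1, b_2 ∈ B_i of [ d_{G_i}(s, b_1) + d_{G̃}(b_1, b_2) + d_{G_i}(b_2, t) ] ), where B_i is the boundary vertex set of G_i and G̃ is the overlay graph built with local partition distances as in the No-Boundary strategy. -/

import Mathlib

open scoped ENNReal Classical

namespace PSP

/-- A weighted undirected graph: symmetric adjacency and a weight function
with values in `ℝ≥0∞` (so weights are non-negative). -/
structure WGraph (V : Type*) where
  Adj : V → V → Prop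
  symm : ∀ {u v}, Adj u v → Adj v u
  w : V → V → ℝ≥0∞

variable {V : Type*} {ι : Type*}

/-- Sum of `f` over consecutive pairs of a list. -/
noncomputable def pairSum (f : V → V → ℝ≥0∞) : List V → ℝ≥0∞
  | a :: b :: rest => f a b + pairSum f (b :: rest)
  | _ => 0

/-- Weighted length of a walk (given as a list of vertices). -/
noncomputable def wlen (G : WGraph V) (l : List V) : ℝ≥0∞ := pairSum G.w l

/-- `l` is a walk in `G` from `s` to `t`: consecutive vertices are adjacent,
the first vertex is `s` and the last is `t`. -/
def IsWalk (G : WGraph V) (s t : V) (l : List V) : Prop :=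
  l.Chain' G.Adj ∧ l.head? = some s ∧ l.getLast? = some t

/-- Shortest-path distance in `G` (`⊤` if no walk exists). -/
noncomputable def dist (G : WGraph V) (s t : V) : ℝ≥0∞ :=
  sInf {x | ∃ l, IsWalk G s t l ∧ wlen G l = x}

/-- Induced subgraph on a vertex set `S`. -/
def induce (G : WGraph V) (S : Set V) : WGraph V where
  Adj u v := G.Adj u v ∧ u ∈ S ∧ v ∈ S
  symm h := ⟨G.symm h.1, h.2.2, h.2.1⟩
  w := G.w

/-- A partition of the vertex set is given by a function `P : V → ι`
assigning each vertex its partition index. The set of all boundary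
vertices: vertices having a neighbor in another partition. -/
def bdry (G : WGraph V) (P : V → ι) : Set V :=
  {v | ∃ u, G.Adj v u ∧ P u ≠ P v}

/-- Boundary vertices of partition `i`. -/
def bdryIn (G : WGraph V) (P : V → ι) (i : ι) : Set V :=
  {v | P v = i ∧ ∃ u, G.Adj v u ∧ P u ≠ i}

/-- The induced subgraph `G_i` of partition `i`. -/
def partGraph (G : WGraph V) (P : V → ι) (i : ι) : WGraph V :=
  induce G {x | P x = i}

/-- The No-Boundary overlay graph `G̃`: vertices are boundary vertices; for each
partition, each boundary pair gets an edge of weight equal to the *local*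
partition distance; inter-partition edges of `G` keep their original weight. -/
noncomputable def overlay (G : WGraph V) (P : V → ι) : WGraph V where
  Adj u v := (P u = P v ∧ u ∈ bdry G P ∧ v ∈ bdry G P) ∨ (P u ≠ P v ∧ G.Adj u v)
  symm := by
    rintro u v (⟨h1, h2, h3⟩ | ⟨h1, h2⟩)
    · exact Or.inl ⟨h1.symm, h3, h2⟩
    · exact Or.inr ⟨fun h => h1 h.symm, G.symm h2⟩
  w u v := if P u = P v then dist (partGraph G P (P u)) u v else G.w u v

/-- A half-connected boundary vertex: has a non-boundary neighbor in its own partition. -/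
def halfC (G : WGraph V) (P : V → ι) (b : V) : Prop :=
  b ∈ bdry G P ∧ ∃ u, G.Adj b u ∧ P u = P b ∧ u ∉ bdry G P

/-- A full-connected boundary vertex: all in-partition neighbors are boundary vertices. -/
def fullC (G : WGraph V) (P : V → ι) (b : V) : Prop :=
  b ∈ bdry G P ∧ ∀ u, G.Adj b u → P u = P b → u ∈ bdry G P

/-- The pruned overlay graph `G̃'`, with inserted boundary-pair weights `ω`:
edges among half-connected boundary pairs of the same partition (weight `ω`),
all inter-partition edges, and the original in-partition adjacent edges of
full-connected boundary vertices. -/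
noncomputable def pruned (G : WGraph V) (P : V → ι) (ω : V → V → ℝ≥0∞) : WGraph V where
  Adj u v :=
    (P u = P v ∧ halfC G P u ∧ halfC G P v) ∨
    (P u ≠ P v ∧ G.Adj u v) ∨
    (P u = P v ∧ G.Adj u v ∧ u ∈ bdry G P ∧ v ∈ bdry G P ∧ (fullC G P u ∨ fullC G P v))
  symm := by
    rintro u v (⟨h1, h2, h3⟩ | ⟨h1, h2⟩ | ⟨h1, h2, h3, h4, h5⟩)
    · exact Or.inl ⟨h1.symm, h3, h2⟩
    · exact Or.inr (Or.inl ⟨fun h => h1 h.symm, G.symm h2⟩)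
    · exact Or.inr (Or.inr ⟨h1.symm, G.symm h2, h4, h3, h5.symm⟩)
  w u v := if P u = P v ∧ halfC G P u ∧ halfC G P v then ω u v else G.w u v

/-- The augmented partition graph `G'_i`: the induced subgraph `G_i` plus, for each
boundary pair `b₁ b₂ ∈ B_i`, an inserted edge of weight `ω b₁ b₂` (taking the
minimum with an already-existing edge weight). -/
noncomputable def augment (G : WGraph V) (P : V → ι) (i : ι) (ω : V → V → ℝ≥0∞) : WGraph V where
  Adj u v := (G.Adj u v ∧ P u = i ∧ P v = i) ∨ (u ∈ bdryIn G P i ∧ v ∈ bdryIn G P i)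
  symm := by
    rintro u v (⟨h1, h2, h3⟩ | ⟨h1, h2⟩)
    · exact Or.inl ⟨G.symm h1, h3, h2⟩
    · exact Or.inr ⟨h2, h1⟩
  w u v :=
    if u ∈ bdryIn G P i ∧ v ∈ bdryIn G P i then
      (if G.Adj u v ∧ P u = i ∧ P v = i then min (ω u v) (G.w u v) else ω u v)
    else G.w u v

/-- Graph obtained from `G` by adding, for every pair `u v ∈ S`, a shortcut edge
of weight `dist G u v` (taking the minimum with an already-existing edge weight). -/
noncomputable def shortcut (G : WGraph V) (S : Set V) : WGraph V where
  Adj u v := G.Adj u v ∨ (u ∈ S ∧ v ∈ S)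
  symm := by
    rintro u v (h | ⟨h1, h2⟩)
    · exact Or.inl (G.symm h)
    · exact Or.inr ⟨h2, h1⟩
  w u v :=
    if u ∈ S ∧ v ∈ S then
      (if G.Adj u v then min (dist G u v) (G.w u v) else dist G u v)
    else G.w u v

/-- Vertex-splitting construction: each cut vertex `x ∈ X` keeps its neighbors in
group `N x 0`; for `1 ≤ i ≤ l x` a duplicate `(x, i)` is created, connected to the
vertices of `N x i` with the original weights and to `x` by a zero-weight edge. -/
noncomputable def split (G : WGraph V) (X : Set V) (N : V → ℕ → Set V) (l : V → ℕ) :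
    WGraph (V ⊕ V × ℕ) where
  Adj a b := match a, b with
    | .inl u, .inl v => G.Adj u v ∧ (u ∈ X → v ∈ N u 0) ∧ (v ∈ X → u ∈ N v 0)
    | .inl v, .inr (x, i) => x ∈ X ∧ 1 ≤ i ∧ i ≤ l x ∧ ((G.Adj x v ∧ v ∈ N x i) ∨ v = x)
    | .inr (x, i), .inl v => x ∈ X ∧ 1 ≤ i ∧ i ≤ l x ∧ ((G.Adj x v ∧ v ∈ N x i) ∨ v = x)
    | .inr _, .inr _ => False
  symm := by
    rintro (u | ⟨x, i⟩) (v | ⟨y, j⟩) h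
    · exact ⟨G.symm h.1, h.2.2, h.2.1⟩
    · exact h
    · exact h
    · exact h.elim
  w a b := match a, b with
    | .inl u, .inl v => G.w u v
    | .inl v, .inr (x, _) => if v = x then 0 else G.w x v
    | .inr (x, _), .inl v => if v = x then 0 else G.w x v
    | .inr _, .inr _ => 0


lemma pairSum_nil (f : V → V → ℝ≥0∞) : pairSum f [] = 0 := rfl
lemma pairSum_single (f : V → V → ℝ≥0∞) (a : V) : pairSum f [a] = 0 := rfl
lemma pairSum_cons (f : V → V → ℝ≥0∞) (a b : V) (l : List V) :
    pairSum f (a :: b :: l) = f a b + pairSum f (b :: l) := rfl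

lemma pairSum_split (f : V → V → ℝ≥0∞) (b : V) (l2 : List V) :
    ∀ l1 : List V, pairSum f (l1 ++ b :: l2) = pairSum f (l1 ++ [b]) + pairSum f (b :: l2)
  | [] => by simp [pairSum_single]
  | [a] => by simp [pairSum_cons, pairSum_single, add_assoc]
  | a :: c :: l1 => by
      have := pairSum_split f b l2 (c :: l1)
      simp only [List.cons_append] at this
      simp only [List.cons_append, pairSum_cons]
      rw [this, add_assoc]

lemma dist_le_wlen {G : WGraph V} {s t : V} {l : List V} (h : IsWalk G s t l) :
    dist G s t ≤ wlen G l := sInf_le ⟨l, h, rfl⟩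

lemma le_dist {G : WGraph V} {s t : V} {c : ℝ≥0∞}
    (h : ∀ l, IsWalk G s t l → c ≤ wlen G l) : c ≤ dist G s t := by
  refine le_sInf ?_
  rintro x ⟨l, hl, rfl⟩
  exact h l hl

lemma dist_self_le (G : WGraph V) (b : V) : dist G b b ≤ 0 := by
  refine le_trans (dist_le_wlen (l := [b]) ⟨?_, rfl, rfl⟩) ?_
  · exact List.isChain_singleton b
  · simp [wlen, pairSum_single]

lemma dist_mono {G H : WGraph V} (hadj : ∀ u v, H.Adj u v → G.Adj u v)
    (hw : G.w = H.w) (s t : V) : dist G s t ≤ dist H s t := by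
  refine le_dist fun l hl => ?_
  have : IsWalk G s t l := ⟨hl.1.imp hadj, hl.2⟩
  calc dist G s t ≤ wlen G l := dist_le_wlen this
  _ = wlen H l := by rw [wlen, wlen, hw]
lemma head?_append_cons (c : List V) (a : V) (x y : List V) :
    (c ++ a :: x).head? = (c ++ a :: y).head? := by cases c <;> simp

lemma walk_append {G : WGraph V} {s b t : V} {l1 l2 : List V}
    (h1 : IsWalk G s b l1) (h2 : IsWalk G b t l2) :
    ∃ l, IsWalk G s t l ∧ wlen G l = wlen G l1 + wlen G l2 := by
  obtain ⟨c1, hd1, gl1⟩ := h1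
  obtain ⟨c2, hd2, gl2⟩ := h2
  have hl1ne : l1 ≠ [] := by rintro rfl; simp at gl1
  have hl2ne : l2 ≠ [] := by rintro rfl; simp at hd2
  obtain ⟨a, l2', rfl⟩ := List.exists_cons_of_ne_nil hl2ne
  have ha : a = b := by simpa using hd2
  subst ha
  have hdecomp : l1.dropLast ++ [l1.getLast hl1ne] = l1 := List.dropLast_append_getLast hl1ne
  have hgl : l1.getLast hl1ne = a := by
    rw [List.getLast?_eq_getLast hl1ne] at gl1; simpa using gl1
  refine ⟨l1.dropLast ++ a :: l2', ⟨?_, ?_, ?_⟩, ?_⟩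
  · have hc1' : (l1.dropLast ++ [a]).Chain' G.Adj := by rw [hgl] at hdecomp; rw [hdecomp]; exact c1
    unfold List.Chain' at hc1' ⊢
    rw [List.isChain_append] at hc1' ⊢
    obtain ⟨cA, _, hcond⟩ := hc1'
    refine ⟨cA, c2, fun x hx y hy => ?_⟩
    simp only [List.head?_cons, Option.mem_def, Option.some.injEq] at hy
    subst hy
    exact hcond x hx a rfl
  · rw [head?_append_cons l1.dropLast a l2' []]
    rw [hgl] at hdecomp; rw [hdecomp]; exact hd1
  · rw [List.getLast?_append_of_ne_nil _ (by simp : (a :: l2') ≠ [])]; exact gl2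
  · rw [wlen, pairSum_split, ← wlen, ← wlen]
    rw [hgl] at hdecomp; rw [hdecomp]

lemma dist_triangle (G : WGraph V) (s b t : V) :
    dist G s t ≤ dist G s b + dist G b t := by
  rw [show dist G s b = sInf {x | ∃ l, IsWalk G s b l ∧ wlen G l = x} from rfl,
    ENNReal.sInf_add]
  refine le_iInf₂ fun x hx => ?_
  obtain ⟨l1, hl1, rfl⟩ := hx
  rw [show dist G b t = sInf {x | ∃ l, IsWalk G b t l ∧ wlen G l = x} from rfl,
    add_comm, ENNReal.sInf_add]
  refine le_iInf₂ fun y hy => ?_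
  obtain ⟨l2, hl2, rfl⟩ := hy
  obtain ⟨l, hl, hw⟩ := walk_append hl1 hl2
  rw [add_comm]
  exact hw ▸ dist_le_wlen hl

lemma walk_split {G : WGraph V} {s t : V} {A B : List V} (hA : A ≠ []) (hB : B ≠ [])
    (h : IsWalk G s t (A ++ B)) :
    IsWalk G s (A.getLast hA) A ∧
    IsWalk G (A.getLast hA) t (A.getLast hA :: B) ∧
    G.Adj (A.getLast hA) (B.head hB) ∧
    wlen G (A ++ B) = wlen G A + wlen G (A.getLast hA :: B) := by
  obtain ⟨hc, hd, hg⟩ := h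
  unfold List.Chain' at hc
  rw [List.isChain_append] at hc
  obtain ⟨cA, cB, hcond⟩ := hc
  have hgB : B.getLast? = some t := by
    rw [List.getLast?_append_of_ne_nil _ hB] at hg; exact hg
  have hadj : G.Adj (A.getLast hA) (B.head hB) :=
    hcond _ (by rw [List.getLast?_eq_getLast hA]; rfl) _
      (by rw [List.head?_eq_head hB]; rfl)
  refine ⟨⟨cA, ?_, List.getLast?_eq_getLast hA⟩, ⟨?_, rfl, ?_⟩, hadj, ?_⟩
  · rw [List.head?_append_of_ne_nil _ hA] at hd; exact hd
  · unfold List.Chain'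
    rw [List.isChain_cons]
    refine ⟨fun y hy => ?_, cB⟩
    rw [List.head?_eq_head hB] at hy
    simp only [Option.mem_def, Option.some.injEq] at hy
    subst hy; exact hadj
  · rw [show (A.getLast hA :: B) = [A.getLast hA] ++ B from rfl,
      List.getLast?_append_of_ne_nil _ hB]; exact hgB
  · have hdecomp : A.dropLast ++ [A.getLast hA] = A := List.dropLast_append_getLast hA
    conv_lhs => rw [← hdecomp]
    rw [List.append_assoc]
    rw [wlen, show [A.getLast hA] ++ B = A.getLast hA :: B from rfl, pairSum_split,
      ← wlen, ← wlen, hdecomp]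

lemma walk_split' {G : WGraph V} {s t : V} {C S : List V} (hC : C ≠ []) (hS : S ≠ [])
    (h : IsWalk G s t (C ++ S)) :
    IsWalk G s (S.head hS) (C ++ [S.head hS]) ∧
    IsWalk G (S.head hS) t S ∧
    G.Adj (C.getLast hC) (S.head hS) ∧
    wlen G (C ++ S) = wlen G (C ++ [S.head hS]) + wlen G S := by
  obtain ⟨hc, hd, hg⟩ := h
  unfold List.Chain' at hc
  rw [List.isChain_append] at hc
  obtain ⟨cC, cS, hcond⟩ := hc
  have hadj : G.Adj (C.getLast hC) (S.head hS) :=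
    hcond _ (by rw [List.getLast?_eq_getLast hC]; rfl) _
      (by rw [List.head?_eq_head hS]; rfl)
  have hSdecomp : S.head hS :: S.tail = S := List.cons_head_tail hS
  refine ⟨⟨?_, ?_, ?_⟩, ⟨cS, (List.head?_eq_head hS), ?_⟩, hadj, ?_⟩
  · unfold List.Chain'
    rw [List.isChain_append]
    refine ⟨cC, List.isChain_singleton _, fun x hx y hy => ?_⟩
    rw [List.getLast?_eq_getLast hC] at hx
    simp only [Option.mem_def, Option.some.injEq, List.head?_cons] at hx hy
    subst hx; subst hy; exact hadj
  · rw [List.head?_append_of_ne_nil _ hC]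
    rw [List.head?_append_of_ne_nil _ hC] at hd; exact hd
  · rw [List.getLast?_append_of_ne_nil _ (by simp : ([S.head hS] : List V) ≠ [])]; rfl
  · rw [List.getLast?_append_of_ne_nil _ hS] at hg; exact hg
  · conv_lhs => rw [← hSdecomp]
    rw [wlen, pairSum_split, ← wlen, ← wlen, hSdecomp]

lemma chain'_induce {G : WGraph V} {S : Set V} :
    ∀ {A : List V}, A.Chain' G.Adj → (∀ v ∈ A, v ∈ S) →
      A.Chain' (fun u v => G.Adj u v ∧ u ∈ S ∧ v ∈ S)
  | [], _, _ => List.isChain_nil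
  | [_], _, _ => List.isChain_singleton _
  | a :: b :: A, hc, hm => by
      unfold List.Chain' at hc ⊢
      rw [List.isChain_cons_cons] at hc ⊢
      exact ⟨⟨hc.1, hm a (by simp), hm b (by simp)⟩,
        chain'_induce hc.2 fun v hv => hm v (by simp [hv])⟩

/-- Theorem 2, same-partition query under No-Boundary. -/
theorem stmt2 {V ι : Type*} (G : WGraph V) (P : V → ι) (i : ι) (s t : V)
    (hs : P s = i) (ht : P t = i)
    (hov : ∀ b1 ∈ bdry G P, ∀ b2 ∈ bdry G P,
      dist (overlay G P) b1 b2 = dist G b1 b2) :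
    dist G s t =
      min (dist (partGraph G P i) s t)
        (⨅ b1 ∈ bdryIn G P i, ⨅ b2 ∈ bdryIn G P i,
          dist (partGraph G P i) s b1 + dist (overlay G P) b1 b2 +
            dist (partGraph G P i) b2 t) := by
  have hsub : ∀ b, b ∈ bdryIn G P i → b ∈ bdry G P := by
    rintro b ⟨hbi, u, hadj, hu⟩
    exact ⟨u, hadj, by rw [hbi]; exact hu⟩
  have hmonoG : ∀ u v, dist G u v ≤ dist (partGraph G P i) u v := fun u v =>
    dist_mono (H := partGraph G P i) (fun a b h => h.1) rfl u v
  refine le_antisymm (le_min (hmonoG s t)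
    (le_iInf₂ fun b1 hb1 => le_iInf₂ fun b2 hb2 => ?_)) ?_
  · rw [hov b1 (hsub _ hb1) b2 (hsub _ hb2)]
    calc dist G s t ≤ dist G s b1 + dist G b1 t := dist_triangle G s b1 t
      _ ≤ dist G s b1 + (dist G b1 b2 + dist G b2 t) :=
          add_le_add_right (dist_triangle G b1 b2 t) _
      _ ≤ dist (partGraph G P i) s b1 + (dist G b1 b2 + dist (partGraph G P i) b2 t) :=
          add_le_add (hmonoG s b1) (add_le_add_right (hmonoG b2 t) _)
      _ = dist (partGraph G P i) s b1 + dist G b1 b2 + dist (partGraph G P i) b2 t := by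
          rw [add_assoc]
  · refine le_dist fun l hl => ?_
    by_cases hall : ∀ v ∈ l, P v = i
    · refine le_trans (min_le_left _ _) ?_
      exact dist_le_wlen (G := partGraph G P i) ⟨chain'_induce hl.1 hall, hl.2⟩
    · push_neg at hall
      obtain ⟨v0, hv0mem, hv0⟩ := hall
      classical
      set p : V → Bool := fun v => decide (P v = i) with hp
      obtain ⟨s', l', rfl⟩ := List.exists_cons_of_ne_nil
        (show l ≠ [] by rintro rfl; exact (by simpa using hl.2.1))
      have hs2 : s = s' := by simpa using hl.2.1.symm
      subst hs2
      have hA : (s :: l').takeWhile p ≠ [] := by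
        rw [List.takeWhile_cons_of_pos (by simp [hp, hs])]
        simp
      have hB : (s :: l').dropWhile p ≠ [] := by
        intro h
        rw [List.dropWhile_eq_nil_iff] at h
        exact hv0 (by simpa [hp] using h v0 hv0mem)
      have hABeq : (s :: l').takeWhile p ++ (s :: l').dropWhile p = s :: l' :=
        List.takeWhile_append_dropWhile
      obtain ⟨w1, w2, hadj1, hlen1⟩ := walk_split hA hB
        (show IsWalk G s t ((s :: l').takeWhile p ++ (s :: l').dropWhile p) by
          rw [hABeq]; exact hl)
      set A := (s :: l').takeWhile p
      set B := (s :: l').dropWhile p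
      set b1 := A.getLast hA with hb1def
      have hPb1 : P b1 = i := by
        have := List.mem_takeWhile_imp (List.getLast_mem hA)
        simpa [hp] using this
      have hPhB : P (B.head hB) ≠ i := by
        have := List.head_dropWhile_not p hB
        simpa [hp] using this
      have hb1mem : b1 ∈ bdryIn G P i := ⟨hPb1, B.head hB, hadj1, hPhB⟩
      have wA : IsWalk (partGraph G P i) s b1 A := by
        refine ⟨chain'_induce w1.1 fun v hv => ?_, w1.2⟩
        have h2 := List.mem_takeWhile_imp hv
        simpa [hp] using h2
      have d1 : dist (partGraph G P i) s b1 ≤ wlen G A := dist_le_wlen wA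
      set m : List V := b1 :: B with hmdef
      have hmt : m.getLast? = some t := w2.2.2
      have hmne : m.reverse ≠ [] := by simp [hmdef]
      obtain ⟨a, r, hr⟩ := List.exists_cons_of_ne_nil hmne
      have hat : a = t := by
        have h1 := List.head?_reverse (l := m)
        rw [hr, hmt] at h1
        simpa using h1
      have hSne : m.reverse.takeWhile p ≠ [] := by
        rw [hr, List.takeWhile_cons_of_pos (by simp [hp, hat, ht])]
        simp
      have hCne : m.reverse.dropWhile p ≠ [] := by
        intro h
        rw [List.dropWhile_eq_nil_iff] at h
        have hmem : B.head hB ∈ m.reverse := by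
          rw [List.mem_reverse, hmdef]
          exact List.mem_cons_of_mem _ (List.head_mem hB)
        exact hPhB (by simpa [hp] using h _ hmem)
      set S := (m.reverse.takeWhile p).reverse with hSdef
      set C := (m.reverse.dropWhile p).reverse with hCdef
      have hS' : S ≠ [] := by simpa [hSdef] using hSne
      have hC' : C ≠ [] := by simpa [hCdef] using hCne
      have hCS : C ++ S = m := by
        rw [hCdef, hSdef, ← List.reverse_append, List.takeWhile_append_dropWhile,
          List.reverse_reverse]
      obtain ⟨w3, w4, hadj2, hlen2⟩ := walk_split' hC' hS'
        (show IsWalk G b1 t (C ++ S) by rw [hCS]; exact w2)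
      set b2 := S.head hS' with hb2def
      have hPb2 : P b2 = i := by
        have hmem : b2 ∈ m.reverse.takeWhile p := by
          rw [← List.mem_reverse, ← hSdef]
          exact List.head_mem hS'
        simpa [hp] using List.mem_takeWhile_imp hmem
      have hClast : C.getLast hC' = (m.reverse.dropWhile p).head hCne := by
        have h1 : C.getLast? = (m.reverse.dropWhile p).head? := by
          rw [hCdef, List.getLast?_reverse]
        rw [List.getLast?_eq_getLast hC', List.head?_eq_head hCne] at h1
        simpa using h1
      have hPClast : P (C.getLast hC') ≠ i := by
        rw [hClast]
        have := List.head_dropWhile_not p hCne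
        simpa [hp] using this
      have hb2mem : b2 ∈ bdryIn G P i := ⟨hPb2, C.getLast hC', G.symm hadj2, hPClast⟩
      have wS : IsWalk (partGraph G P i) b2 t S := by
        refine ⟨chain'_induce w4.1 fun v hv => ?_, w4.2⟩
        have hmem : v ∈ m.reverse.takeWhile p := by
          rw [← List.mem_reverse, ← hSdef]; exact hv
        simpa [hp] using List.mem_takeWhile_imp hmem
      have d2 : dist (partGraph G P i) b2 t ≤ wlen G S := dist_le_wlen wS
      have d3 : dist G b1 b2 ≤ wlen G (C ++ [b2]) := dist_le_wlen w3
      have hwl : wlen G (s :: l') = wlen G A + (wlen G (C ++ [b2]) + wlen G S) := by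
        rw [← hABeq, hlen1, ← hCS, hlen2]
      refine le_trans (min_le_right _ _) ?_
      refine le_trans (iInf₂_le b1 hb1mem) ?_
      refine le_trans (iInf₂_le b2 hb2mem) ?_
      rw [hov b1 (hsub _ hb1mem) b2 (hsub _ hb2mem), hwl, ← add_assoc]
      exact add_le_add (add_le_add d1 d3) d2

end PSP
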